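/- (No signal can be persistently exciting with respect to the identity on an infinite-dimensional Hilbert space, Remark 3.2) Let X be an infinite-dimensional real Hilbert space. Then there do not exist a continuous signal g : [0,∞) → X and constants T, κ > 0 such that ∫_0^T ⟨g(τ),x⟩² dτ ≥ κ‖x‖² for all x ∈ X. In particular, no continuous signal g : [0,∞) → X is PE with respect to the identity operator Id_X. -/

import Mathlib

open Set

/-- `g` (restricted to `[0,∞)`) is persistently exciting with respect to the identity
operator on `X`. -/
def IsPEId {X : Type*} [NormedAddCommGroup X] [InnerProductSpace ℝ X] (g : ℝ → X) : Prop :=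
  ∃ T κ : ℝ, 0 < T ∧ 0 < κ ∧
    ∀ x : X, ∀ t : ℝ, 0 ≤ t →
      κ * ‖x‖ ^ 2 ≤ ∫ τ in t..(t + T), (inner ℝ (g τ) x : ℝ) ^ 2

/-- In an infinite-dimensional inner product space there is an orthonormal sequence. -/
lemma exists_orthonormal_seq {X : Type*} [NormedAddCommGroup X] [InnerProductSpace ℝ X]
    (hX : ¬ FiniteDimensional ℝ X) : ∃ e : ℕ → X, Orthonormal ℝ e := by
  have b := Module.Basis.ofVectorSpace ℝ X
  have hinf : Infinite (Module.Basis.ofVectorSpaceIndex ℝ X) := by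
    by_contra h
    have : Finite (Module.Basis.ofVectorSpaceIndex ℝ X) := not_infinite_iff_finite.mp h
    have := Fintype.ofFinite (Module.Basis.ofVectorSpaceIndex ℝ X)
    exact hX (Module.Basis.finiteDimensional_of_finite b)
  let emb := Infinite.natEmbedding (Module.Basis.ofVectorSpaceIndex ℝ X)
  have hli : LinearIndependent ℝ (b ∘ emb) :=
    b.linearIndependent.comp emb emb.injective
  exact ⟨InnerProductSpace.gramSchmidtNormed ℝ (b ∘ emb), InnerProductSpace.gramSchmidtNormed_orthonormal hli⟩

lemma key_aux {X : Type*} [NormedAddCommGroup X] [InnerProductSpace ℝ X]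
    (hX : ¬ FiniteDimensional ℝ X) (g : ℝ → X) (a T κ : ℝ)
    (hg : ContinuousOn g (Ici 0)) (ha : 0 ≤ a) (hT : 0 < T) (hκ : 0 < κ)
    (h : ∀ x : X, κ * ‖x‖ ^ 2 ≤ ∫ τ in a..(a + T), (inner ℝ (g τ) x : ℝ) ^ 2) : False := by
  obtain ⟨e, he⟩ := exists_orthonormal_seq hX
  have haT : a ≤ a + T := by linarith
  have hsub : Set.uIoc a (a + T) ⊆ Ici (0:ℝ) := by
    rw [uIoc_of_le haT]
    intro x hx
    exact le_trans ha (le_of_lt hx.1)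
  have hIcc : Icc a (a + T) ⊆ Ici (0:ℝ) := fun x hx => le_trans ha hx.1
  -- continuity of each integrand on [a, a+T]
  have hcont : ∀ n : ℕ, ContinuousOn (fun τ => (inner ℝ (g τ) (e n) : ℝ) ^ 2) (Icc a (a + T)) := by
    intro n
    exact (((hg.mono hIcc).inner continuousOn_const)).pow 2
  -- dominated convergence
  have hbound_cont : ContinuousOn (fun τ => ‖g τ‖ ^ 2) (Icc a (a + T)) :=
    ((hg.mono hIcc).norm).pow 2
  have htend : Filter.Tendsto (fun n => ∫ τ in a..(a + T), (inner ℝ (g τ) (e n) : ℝ) ^ 2)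
      Filter.atTop (nhds (∫ τ in a..(a + T), (0:ℝ))) := by
    apply intervalIntegral.tendsto_integral_filter_of_dominated_convergence
      (fun τ => ‖g τ‖ ^ 2)
    · filter_upwards with n
      exact ContinuousOn.aestronglyMeasurable
        ((hcont n).mono (by rw [uIoc_of_le haT]; exact Ioc_subset_Icc_self))
        measurableSet_uIoc
    · filter_upwards with n
      filter_upwards with τ hτ
      have := norm_inner_le_norm (𝕜 := ℝ) (g τ) (e n)
      rw [he.1 n, mul_one] at this
      calc ‖(inner ℝ (g τ) (e n) : ℝ) ^ 2‖ = ‖(inner ℝ (g τ) (e n) : ℝ)‖ ^ 2 := by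
            rw [norm_pow]
        _ ≤ ‖g τ‖ ^ 2 := by
            exact pow_le_pow_left₀ (norm_nonneg _) this 2
    · exact hbound_cont.intervalIntegrable_of_Icc haT
    · filter_upwards with τ hτ
      have hsum : Summable (fun n => ‖(inner ℝ (e n) (g τ) : ℝ)‖ ^ 2) :=
        he.inner_products_summable (g τ)
      have h0 : Filter.Tendsto (fun n => ‖(inner ℝ (e n) (g τ) : ℝ)‖ ^ 2)
          Filter.atTop (nhds 0) := hsum.tendsto_atTop_zero
      have heq : (fun n => (inner ℝ (g τ) (e n) : ℝ) ^ 2)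
          = fun n => ‖(inner ℝ (e n) (g τ) : ℝ)‖ ^ 2 := by
        funext n
        rw [Real.norm_eq_abs, sq_abs, real_inner_comm]
      rw [heq]
      exact h0
  rw [intervalIntegral.integral_const, smul_zero] at htend
  have hle : κ ≤ 0 := by
    apply le_of_tendsto_of_tendsto' tendsto_const_nhds htend
    intro n
    have := h (e n)
    rwa [he.1 n, one_pow, mul_one] at this
  linarith

theorem no_pe_wrt_identity_in_infinite_dimension
    {X : Type*} [NormedAddCommGroup X] [InnerProductSpace ℝ X] [CompleteSpace X]
    (hX : ¬ FiniteDimensional ℝ X) :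
    (¬ ∃ (g : ℝ → X) (T κ : ℝ), ContinuousOn g (Ici 0) ∧ 0 < T ∧ 0 < κ ∧
        ∀ x : X, κ * ‖x‖ ^ 2 ≤ ∫ τ in (0:ℝ)..T, (inner ℝ (g τ) x : ℝ) ^ 2) ∧
      ∀ g : ℝ → X, ContinuousOn g (Ici 0) → ¬ IsPEId g := by
  constructor
  · rintro ⟨g, T, κ, hg, hT, hκ, h⟩
    refine key_aux hX g 0 T κ hg le_rfl hT hκ ?_
    simpa using h
  · rintro g hg ⟨T, κ, hT, hκ, h⟩
    exact key_aux hX g 0 T κ hg le_rfl hT hκ (fun x => by simpa using h x 0 le_rfl)
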